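/- arXiv:1204.0299 — 4 statements merged into one kernel-verified Lean document; each statement's English description precedes it below -/
import Mathlib

section
/- There exists a finite set T of Wang tiles that tiles the plane only aperiodically: there is a valid tiling of ℤ × ℤ by tiles from T, but there is no valid tiling f of ℤ × ℤ by tiles from T that is periodic, i.e. no valid tiling f for which there exists n ≥ 1 with f(x + n, y) = f(x, y) and f(x, y + n) = f(x, y) for all (x, y) ∈ ℤ × ℤ. -/
/-- A Wang tile: a quadruple of colors (north, east, south, west). -/
abbrev WangTile : Type := ℕ × ℕ × ℕ × ℕ

def WangTile.north (t : WangTile) : ℕ := t.1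
def WangTile.east (t : WangTile) : ℕ := t.2.1
def WangTile.south (t : WangTile) : ℕ := t.2.2.1
def WangTile.west (t : WangTile) : ℕ := t.2.2.2

/-- `f` is a valid tiling of the region `R` by tiles from `T`. -/
def IsValidTiling (T : Set WangTile) (R : Set (ℤ × ℤ)) (f : ℤ × ℤ → WangTile) : Prop :=
  (∀ p ∈ R, f p ∈ T) ∧
  (∀ x y : ℤ, (x, y) ∈ R → (x + 1, y) ∈ R → (f (x, y)).east = (f (x + 1, y)).west) ∧
  (∀ x y : ℤ, (x, y) ∈ R → (x, y + 1) ∈ R → (f (x, y)).north = (f (x, y + 1)).south)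

/-! ### Auxiliary material: Kari's aperiodic tile set

We use (a variant of) Kari's aperiodic Wang tile set.  A tile encodes one step of
computing a "balanced representation" digit stream of a real (here rational) number
`x` together with a multiplication by `2` (when `x ≤ 1`) or by `2/3` (when `x > 1`).
South/north edges carry digits, east/west edges carry the "carries" of the
multiplication, tagged (via disjoint ranges of codes) with which multiplier is used.

A tiling exists because the map `g x = 2x` (for `x ≤ 1`), `g x = 2x/3` (for `x > 1`)
maps `(2/3, 2]` onto itself bijectively, so a bi-infinite orbit exists, and each pair
of consecutive orbit points yields a valid row of tiles.

No tiling is periodic: in a tiling of period `n`, summing the tile identity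
`north = q·south + west - east` over a horizontal period makes the carries telescope
away, so the row digit-sums satisfy `S(m+1) = 2·S(m)` or `3·S(m+1) = 2·S(m)`.
Vertical periodicity then forces `3^b · S(0) = 2^n · S(0)`; the tile set excludes an
all-zero row, so `S(0) > 0`, giving `3^b = 2^n`, impossible for `n ≥ 1`. -/

namespace Kari

/-- The defining predicate of the tile set.  The first disjunct is the multiplier-`2`
family: east/west colors `0, 1` encode carries `-1, 0`.  The second disjunct is the
multiplier-`2/3` family: east/west colors `10, ..., 14` encode carries
`-2/3, ..., 2/3` (in thirds).  North/south colors are digits.  The encoding offsets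
cancel in the differences, so the tile equations can be written directly with the
color codes. -/
def P (t : WangTile) : Prop :=
  (t.east ≤ 1 ∧ t.west ≤ 1 ∧ t.south ≤ 1 ∧ 1 ≤ t.north ∧ t.north ≤ 2 ∧
    (t.north : ℤ) = 2 * t.south + t.west - t.east) ∨
  (10 ≤ t.east ∧ t.east ≤ 14 ∧ 10 ≤ t.west ∧ t.west ≤ 14 ∧
    1 ≤ t.south ∧ t.south ≤ 2 ∧ t.north ≤ 2 ∧
    3 * (t.north : ℤ) = 2 * t.south + t.west - t.east)

instance : DecidablePred P := fun t => by unfold P; exact inferInstance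

/-- The aperiodic tile set: all tiles with colors `< 15` satisfying `P`. -/
def T : Finset WangTile :=
  ((Finset.range 15 ×ˢ Finset.range 15 ×ˢ Finset.range 15 ×ˢ Finset.range 15)).filter P

lemma mem_T {t : WangTile} : t ∈ T ↔ P t := by
  obtain ⟨a, b, c, d⟩ := t
  constructor
  · exact fun h => (Finset.mem_filter.mp h).2
  · intro h
    refine Finset.mem_filter.mpr ⟨?_, h⟩
    simp only [Finset.mem_product, Finset.mem_range]
    rcases h with ⟨h1, h2, h3, h4, h5, h6⟩ | ⟨h1, h2, h3, h4, h5, h6, h7, h8⟩ <;>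
      simp only [WangTile.north, WangTile.east, WangTile.south, WangTile.west] at * <;>
      omega

/-! #### Digits and carries -/

/-- Digit of the balanced representation of `x` at position `k`. -/
def dig (x : ℚ) (k : ℤ) : ℤ := ⌊(k : ℚ) * x⌋ - ⌊((k : ℚ) - 1) * x⌋

/-- Carry at position `k` when multiplying the representation of `x` by `2`. -/
def car2 (x : ℚ) (k : ℤ) : ℤ := 2 * ⌊(k : ℚ) * x⌋ - ⌊(k : ℚ) * (2 * x)⌋

/-- Carry (in thirds) at position `k` when multiplying the representation of `x`
by `2/3`. -/
def car3 (x : ℚ) (k : ℤ) : ℤ := 2 * ⌊(k : ℚ) * x⌋ - 3 * ⌊(k : ℚ) * (2 * x / 3)⌋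

lemma dig_ge {x : ℚ} {c : ℤ} (h : (c : ℚ) ≤ x) (k : ℤ) : c ≤ dig x k := by
  have h1 : ((k : ℚ) - 1) * x + c ≤ (k : ℚ) * x := by nlinarith [h]
  have h2 : ⌊((k : ℚ) - 1) * x + (c : ℚ)⌋ ≤ ⌊(k : ℚ) * x⌋ := Int.floor_le_floor h1
  rw [Int.floor_add_intCast] at h2
  unfold dig; omega

lemma dig_le {x : ℚ} {c : ℤ} (h : x ≤ (c : ℚ)) (k : ℤ) : dig x k ≤ c := by
  have h1 : (k : ℚ) * x ≤ ((k : ℚ) - 1) * x + c := by nlinarith [h]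
  have h2 : ⌊(k : ℚ) * x⌋ ≤ ⌊((k : ℚ) - 1) * x + (c : ℚ)⌋ := Int.floor_le_floor h1
  rw [Int.floor_add_intCast] at h2
  unfold dig; omega

lemma car2_le (x : ℚ) (k : ℤ) : car2 x k ≤ 0 := by
  have h1 : ((⌊(k : ℚ) * x⌋ : ℚ)) ≤ (k : ℚ) * x := Int.floor_le _
  have h2 : ((2 * ⌊(k : ℚ) * x⌋ : ℤ) : ℚ) ≤ (k : ℚ) * (2 * x) := by push_cast; nlinarith
  have h3 := Int.le_floor.mpr h2
  unfold car2; omega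

lemma car2_ge (x : ℚ) (k : ℤ) : -1 ≤ car2 x k := by
  have h1 : (k : ℚ) * x < ⌊(k : ℚ) * x⌋ + 1 := Int.lt_floor_add_one _
  have h2 : (k : ℚ) * (2 * x) < ((2 * ⌊(k : ℚ) * x⌋ + 2 : ℤ) : ℚ) := by push_cast; nlinarith
  have h3 := Int.floor_lt.mpr h2
  unfold car2; omega

lemma car3_le (x : ℚ) (k : ℤ) : car3 x k ≤ 2 := by
  have h1 : ((⌊(k : ℚ) * x⌋ : ℚ)) ≤ (k : ℚ) * x := Int.floor_le _
  have h2 : (k : ℚ) * (2 * x / 3) < ⌊(k : ℚ) * (2 * x / 3)⌋ + 1 := Int.lt_floor_add_one _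
  have h3 : ((2 * ⌊(k : ℚ) * x⌋ - 3 * ⌊(k : ℚ) * (2 * x / 3)⌋ : ℤ) : ℚ) < 3 := by
    push_cast; nlinarith
  have h4 : (2 * ⌊(k : ℚ) * x⌋ - 3 * ⌊(k : ℚ) * (2 * x / 3)⌋ : ℤ) < 3 := by exact_mod_cast h3
  unfold car3; omega

lemma car3_ge (x : ℚ) (k : ℤ) : -2 ≤ car3 x k := by
  have h1 : (k : ℚ) * x < ⌊(k : ℚ) * x⌋ + 1 := Int.lt_floor_add_one _
  have h2 : ((⌊(k : ℚ) * (2 * x / 3)⌋ : ℚ)) ≤ (k : ℚ) * (2 * x / 3) := Int.floor_le _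
  have h3 : (-2 : ℚ) < ((2 * ⌊(k : ℚ) * x⌋ - 3 * ⌊(k : ℚ) * (2 * x / 3)⌋ : ℤ) : ℚ) := by
    push_cast; nlinarith
  have h4 : (-2 : ℤ) < (2 * ⌊(k : ℚ) * x⌋ - 3 * ⌊(k : ℚ) * (2 * x / 3)⌋ : ℤ) := by exact_mod_cast h3
  unfold car3; omega

/-- The tile identity for multiplication by `2`. -/
lemma id2 (x : ℚ) (k : ℤ) : dig (2 * x) k = 2 * dig x k + car2 x (k - 1) - car2 x k := by
  unfold dig car2; push_cast; ring

/-- The tile identity for multiplication by `2/3`. -/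
lemma id3 (x : ℚ) (k : ℤ) : 3 * dig (2 * x / 3) k = 2 * dig x k + car3 x (k - 1) - car3 x k := by
  unfold dig car3; push_cast; ring

/-! #### The dynamical system and a bi-infinite orbit -/

def g (x : ℚ) : ℚ := if x ≤ 1 then 2 * x else 2 * x / 3
def h (x : ℚ) : ℚ := if x ≤ 4 / 3 then 3 * x / 2 else x / 2

lemma g_mem {x : ℚ} (h1 : 2 / 3 < x) (h2 : x ≤ 2) : 2 / 3 < g x ∧ g x ≤ 2 := by
  unfold g; split_ifs <;> constructor <;> linarith

lemma h_mem {x : ℚ} (h1 : 2 / 3 < x) (h2 : x ≤ 2) : 2 / 3 < h x ∧ h x ≤ 2 := by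
  unfold h; split_ifs <;> constructor <;> linarith

lemma gh {x : ℚ} (h1 : 2 / 3 < x) (h2 : x ≤ 2) : g (h x) = x := by
  unfold g h
  split_ifs with ha hb hb
  · linarith
  · ring
  · ring
  · linarith

/-- A bi-infinite orbit of `g` through `1`, using the right inverse `h` of `g`
for negative times. -/
def orb : ℤ → ℚ
  | Int.ofNat k => g^[k] 1
  | Int.negSucc k => h^[k + 1] 1

lemma orbF_mem (k : ℕ) : 2 / 3 < g^[k] 1 ∧ g^[k] 1 ≤ 2 := by
  induction k with
  | zero => norm_num
  | succ k ih => rw [Function.iterate_succ_apply']; exact g_mem ih.1 ih.2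

lemma orbB_mem (k : ℕ) : 2 / 3 < h^[k] 1 ∧ h^[k] 1 ≤ 2 := by
  induction k with
  | zero => norm_num
  | succ k ih => rw [Function.iterate_succ_apply']; exact h_mem ih.1 ih.2

lemma orb_mem (m : ℤ) : 2 / 3 < orb m ∧ orb m ≤ 2 := by
  cases m with
  | ofNat k => exact orbF_mem k
  | negSucc k => exact orbB_mem (k + 1)

lemma orb_succ (m : ℤ) : orb (m + 1) = g (orb m) := by
  cases m with
  | ofNat k =>
      have e : (Int.ofNat k) + 1 = Int.ofNat (k + 1) := rfl
      rw [e]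
      show g^[k + 1] 1 = g (g^[k] 1)
      rw [Function.iterate_succ_apply']
  | negSucc k =>
      cases k with
      | zero =>
          have e : (Int.negSucc 0) + 1 = Int.ofNat 0 := rfl
          rw [e]
          show (1 : ℚ) = g (h^[1] 1)
          have := gh (x := 1) (by norm_num) (by norm_num)
          simpa using this.symm
      | succ k =>
          have e : (Int.negSucc (k + 1)) + 1 = Int.negSucc k := rfl
          rw [e]
          show h^[k + 1] 1 = g (h^[k + 2] 1)
          rw [show k + 2 = (k + 1) + 1 from rfl, Function.iterate_succ_apply' h (k + 1) 1]
          have hm := orbB_mem (k + 1)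
          rw [gh hm.1 hm.2]

/-! #### The tiling -/

/-- The valid tiling: row `m` encodes the multiplication of the balanced
representation of `orb m` by `2` or `2/3` (producing `orb (m + 1)`). -/
def tiling (p : ℤ × ℤ) : WangTile :=
  if orb p.2 ≤ 1 then
    ((dig (2 * orb p.2) p.1).toNat, (car2 (orb p.2) p.1 + 1).toNat,
     (dig (orb p.2) p.1).toNat, (car2 (orb p.2) (p.1 - 1) + 1).toNat)
  else
    ((dig (2 * orb p.2 / 3) p.1).toNat, (car3 (orb p.2) p.1 + 12).toNat,
     (dig (orb p.2) p.1).toNat, (car3 (orb p.2) (p.1 - 1) + 12).toNat)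

lemma tiling_mem (p : ℤ × ℤ) : P (tiling p) := by
  obtain ⟨hxl, hxr⟩ := orb_mem p.2
  by_cases hx1 : orb p.2 ≤ 1
  · refine Or.inl ?_
    simp only [tiling, if_pos hx1, WangTile.north, WangTile.east, WangTile.south, WangTile.west]
    have b1 : (0 : ℤ) ≤ dig (orb p.2) p.1 := dig_ge (by push_cast; linarith) p.1
    have b2 : dig (orb p.2) p.1 ≤ 1 := dig_le (by push_cast; linarith) p.1
    have b3 : (1 : ℤ) ≤ dig (2 * orb p.2) p.1 := dig_ge (by push_cast; linarith) p.1
    have b4 : dig (2 * orb p.2) p.1 ≤ 2 := dig_le (by push_cast; linarith) p.1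
    have c1 := car2_le (orb p.2) p.1
    have c2 := car2_ge (orb p.2) p.1
    have c3 := car2_le (orb p.2) (p.1 - 1)
    have c4 := car2_ge (orb p.2) (p.1 - 1)
    have hid := id2 (orb p.2) p.1
    omega
  · refine Or.inr ?_
    simp only [tiling, if_neg hx1, WangTile.north, WangTile.east, WangTile.south, WangTile.west]
    push_neg at hx1
    have b1 : (1 : ℤ) ≤ dig (orb p.2) p.1 := dig_ge (by push_cast; linarith) p.1
    have b2 : dig (orb p.2) p.1 ≤ 2 := dig_le (by push_cast; linarith) p.1
    have b3 : (0 : ℤ) ≤ dig (2 * orb p.2 / 3) p.1 := dig_ge (by push_cast; linarith) p.1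
    have b4 : dig (2 * orb p.2 / 3) p.1 ≤ 2 := dig_le (by push_cast; linarith) p.1
    have c1 := car3_le (orb p.2) p.1
    have c2 := car3_ge (orb p.2) p.1
    have c3 := car3_le (orb p.2) (p.1 - 1)
    have c4 := car3_ge (orb p.2) (p.1 - 1)
    have hid := id3 (orb p.2) p.1
    omega

lemma tiling_valid : IsValidTiling (↑T) Set.univ tiling := by
  refine ⟨fun p _ => mem_T.mpr (tiling_mem p), ?_, ?_⟩
  · intro x y _ _
    simp only [tiling, WangTile.east, WangTile.west]
    split_ifs with hb
    · rw [show x + 1 - 1 = x by ring]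
    · rw [show x + 1 - 1 = x by ring]
  · intro x y _ _
    have hs : orb (y + 1) = g (orb y) := orb_succ y
    simp only [tiling, WangTile.north, WangTile.south]
    by_cases hb : orb y ≤ 1
    · rw [if_pos hb]
      have hgy : orb (y + 1) = 2 * orb y := by rw [hs]; unfold g; rw [if_pos hb]
      split_ifs <;> simp only [hgy]
    · rw [if_neg hb]
      have hgy : orb (y + 1) = 2 * orb y / 3 := by rw [hs]; unfold g; rw [if_neg hb]
      split_ifs <;> simp only [hgy]

/-! #### No periodic tiling -/

/-- Sum of the south digits along one horizontal period of row `m`. -/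
def rowSum (f : ℤ × ℤ → WangTile) (n : ℕ) (m : ℤ) : ℤ :=
  ∑ k ∈ Finset.range n, ((f ((k : ℤ), m)).south : ℤ)

lemma no_periodic {f : ℤ × ℤ → WangTile} {n : ℕ}
    (hf : IsValidTiling (↑T) Set.univ f) (hn : 1 ≤ n)
    (hper : ∀ x y : ℤ, f (x + (n : ℤ), y) = f (x, y) ∧ f (x, y + (n : ℤ)) = f (x, y)) :
    False := by
  obtain ⟨hmem, hH, hV⟩ := hf
  have hP : ∀ p : ℤ × ℤ, P (f p) := fun p => mem_T.mp (hmem p trivial)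
  have hH' : ∀ k m : ℤ, (f (k, m)).east = (f (k + 1, m)).west := fun k m =>
    hH k m trivial trivial
  have hV' : ∀ k m : ℤ, (f (k, m)).north = (f (k, m + 1)).south := fun k m =>
    hV k m trivial trivial
  -- each row uses a single multiplier (east/west codes of the two families are disjoint)
  have adj : ∀ k m : ℤ, ((f (k, m)).east ≤ 1 ↔ (f (k + 1, m)).east ≤ 1) := by
    intro k m
    rcases hP (k + 1, m) with h1 | h2
    · exact iff_of_true (by rw [hH' k m]; exact h1.2.1) h1.1
    · refine iff_of_false ?_ (by omega)
      rw [hH' k m]; omega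
  have homog : ∀ m k : ℤ, ((f (k, m)).east ≤ 1 ↔ (f (0, m)).east ≤ 1) := by
    intro m k
    induction k using Int.induction_on with
    | zero => exact Iff.rfl
    | succ i ih => exact (adj i m).symm.trans ih
    | pred i ih =>
        have h2 := adj (-(i : ℤ) - 1) m
        rw [show (-(i : ℤ) - 1) + 1 = -(i : ℤ) by ring] at h2
        exact h2.trans ih
  -- the fundamental relation between the digit sums of consecutive rows
  have hrow : ∀ m : ℤ, rowSum f n (m + 1) = 2 * rowSum f n m ∨
      3 * rowSum f n (m + 1) = 2 * rowSum f n m := by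
    intro m
    have hWn : f ((n : ℤ), m) = f (0, m) := by
      have h := (hper 0 m).1; rwa [zero_add] at h
    set W : ℕ → ℤ := fun j => ((f ((j : ℤ), m)).west : ℤ) with hW
    have tele : ∑ k ∈ Finset.range n, (W k - W (k + 1)) = 0 := by
      rw [Finset.sum_range_sub' W n]
      have hWeq : W n = W 0 := by
        simp only [hW, Nat.cast_zero, hWn]
      rw [hWeq, sub_self]
    have hfirst : rowSum f n (m + 1) = ∑ k ∈ Finset.range n, ((f ((k : ℤ), m)).north : ℤ) := by
      unfold rowSum
      refine Finset.sum_congr rfl fun k _ => ?_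
      rw [← hV' (k : ℤ) m]
    by_cases hq : (f (0, m)).east ≤ 1
    · left
      have hbr : ∀ k : ℤ, ((f (k, m)).north : ℤ)
          = 2 * (f (k, m)).south + (f (k, m)).west - (f (k + 1, m)).west := by
        intro k
        have hb := (homog m k).mpr hq
        rcases hP (k, m) with h1 | h2
        · rw [← hH' k m]; exact h1.2.2.2.2.2
        · omega
      calc rowSum f n (m + 1)
          = ∑ k ∈ Finset.range n, ((f ((k : ℤ), m)).north : ℤ) := hfirst
        _ = ∑ k ∈ Finset.range n,
              (2 * ((f ((k : ℤ), m)).south : ℤ) + (W k - W (k + 1))) := by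
            refine Finset.sum_congr rfl fun k _ => ?_
            simp only [hW]
            rw [show (((k + 1 : ℕ) : ℤ)) = (k : ℤ) + 1 by push_cast; ring, hbr (k : ℤ)]
            ring
        _ = 2 * rowSum f n m := by
            rw [Finset.sum_add_distrib, tele, add_zero, ← Finset.mul_sum]
            rfl
    · right
      have hbr : ∀ k : ℤ, 3 * ((f (k, m)).north : ℤ)
          = 2 * (f (k, m)).south + (f (k, m)).west - (f (k + 1, m)).west := by
        intro k
        have hb := (homog m k).not.mpr hq
        rcases hP (k, m) with h1 | h2
        · omega
        · rw [← hH' k m]; exact h2.2.2.2.2.2.2.2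
      calc 3 * rowSum f n (m + 1)
          = ∑ k ∈ Finset.range n, 3 * ((f ((k : ℤ), m)).north : ℤ) := by
            rw [hfirst, Finset.mul_sum]
        _ = ∑ k ∈ Finset.range n,
              (2 * ((f ((k : ℤ), m)).south : ℤ) + (W k - W (k + 1))) := by
            refine Finset.sum_congr rfl fun k _ => ?_
            simp only [hW]
            rw [show (((k + 1 : ℕ) : ℤ)) = (k : ℤ) + 1 by push_cast; ring, hbr (k : ℤ)]
            ring
        _ = 2 * rowSum f n m := by
            rw [Finset.sum_add_distrib, tele, add_zero, ← Finset.mul_sum]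
            rfl
  -- iterating the row relation
  have claim : ∀ m : ℕ, ∃ b, b ≤ m ∧ 3 ^ b * rowSum f n m = 2 ^ m * rowSum f n 0 := by
    intro m
    induction m with
    | zero => exact ⟨0, le_rfl, by simp⟩
    | succ m ih =>
        obtain ⟨b, hb, hEq⟩ := ih
        have hc : ((m : ℤ) + 1) = ((m + 1 : ℕ) : ℤ) := by push_cast; ring
        rcases hrow (m : ℤ) with hcase | hcase <;> rw [hc] at hcase
        · exact ⟨b, by omega, by linear_combination (3 : ℤ) ^ b * hcase + 2 * hEq⟩
        · exact ⟨b + 1, by omega, by linear_combination (3 : ℤ) ^ b * hcase + 2 * hEq⟩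
  have hSper : rowSum f n (n : ℤ) = rowSum f n 0 := by
    unfold rowSum
    refine Finset.sum_congr rfl fun k _ => ?_
    have h := (hper (k : ℤ) 0).2
    rw [zero_add] at h
    rw [h]
  obtain ⟨b, hb, hfin⟩ := claim n
  rw [hSper] at hfin
  have hS0 : 0 ≤ rowSum f n 0 := Finset.sum_nonneg fun k _ => Int.natCast_nonneg _
  rcases eq_or_lt_of_le hS0 with h0 | h0
  · -- the digit sum of row 0 cannot vanish: the unique all-zero-south tile mismatches itself
    have hz : ∀ k ∈ Finset.range n, ((f ((k : ℤ), 0)).south : ℤ) = 0 :=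
      (Finset.sum_eq_zero_iff_of_nonneg fun k _ => Int.natCast_nonneg _).mp h0.symm
    have key : ∀ p : ℤ × ℤ, (f p).south = 0 → (f p).east = 0 ∧ (f p).west = 1 := by
      intro p hp
      rcases hP p with h1 | h2 <;> omega
    have h00 : (f ((0 : ℤ), 0)).south = 0 := by
      have h := hz 0 (Finset.mem_range.mpr (by omega))
      exact_mod_cast h
    have h10 : (f ((1 : ℤ), 0)).south = 0 := by
      by_cases hone : n = 1
      · have hp1 := (hper 0 0).1
        rw [hone] at hp1
        norm_num at hp1
        rw [hp1]
        exact h00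
      · have h := hz 1 (Finset.mem_range.mpr (by omega))
        exact_mod_cast h
    have e0 := (key _ h00).1
    have w1 := (key _ h10).2
    have hhh := hH' 0 0
    rw [show (0 : ℤ) + 1 = 1 by ring] at hhh
    omega
  · -- otherwise `3 ^ b = 2 ^ n`, impossible for `n ≥ 1`
    have hcancel : (3 : ℤ) ^ b = 2 ^ n := mul_right_cancel₀ (ne_of_gt h0) hfin
    have h2 : (2 : ℤ) ∣ 2 ^ n := dvd_pow_self 2 (by omega)
    rw [← hcancel] at h2
    have h3 : (2 : ℤ) ∣ 3 := Int.prime_two.dvd_of_dvd_pow h2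
    norm_num at h3

end Kari

/-- There is a finite set of Wang tiles that tiles the plane, but only aperiodically. -/
theorem exists_aperiodic_wang_tile_set :
    ∃ T : Finset WangTile,
      (∃ f, IsValidTiling (↑T) Set.univ f) ∧
      ¬ ∃ f, IsValidTiling (↑T) Set.univ f ∧
        ∃ n : ℕ, 1 ≤ n ∧ ∀ x y : ℤ,
          f (x + (n : ℤ), y) = f (x, y) ∧ f (x, y + (n : ℤ)) = f (x, y) := by
  refine ⟨Kari.T, ⟨Kari.tiling, Kari.tiling_valid⟩, ?_⟩
  rintro ⟨f, hf, n, hn, hper⟩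
  exact Kari.no_periodic hf hn fun x y => hper x y
end

section
/- Goodman's inequality: for every finite simple graph G with nonempty vertex set, t(K₃, G) ≥ 2·t(K₂, G)² − t(K₂, G), where K₂ and K₃ are the complete graphs on 2 and 3 vertices respectively. -/
/-- The homomorphism density `t(H, G)`: the number of graph homomorphisms `H →g G`
divided by `|V(G)| ^ |V(H)|`, i.e. the probability that a uniformly random map
`V(H) → V(G)` is a homomorphism. -/
noncomputable def homDensity {α β : Type} [Fintype α] [Fintype β]
    (H : SimpleGraph α) (G : SimpleGraph β) : ℝ :=
  (Nat.card (H →g G) : ℝ) / (Fintype.card β : ℝ) ^ (Fintype.card α)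

open Finset

section Aux

variable {β : Type} [Fintype β] [DecidableEq β] (G : SimpleGraph β) [DecidableRel G.Adj]

/-- Homs from `K₂` are adjacent ordered pairs. -/
def goodmanE2 : ((⊤ : SimpleGraph (Fin 2)) →g G) ≃ {p : β × β // G.Adj p.1 p.2} where
  toFun f := ⟨(f 0, f 1), f.map_rel (by decide)⟩
  invFun p := ⟨![p.1.1, p.1.2], by
    intro i j h
    fin_cases i <;> fin_cases j <;> simp_all [G.adj_symm] <;>
      first | exact p.2 | exact p.2.symm⟩
  left_inv f := by ext i; fin_cases i <;> rfl
  right_inv p := rfl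

/-- Homs from `K₃` are adjacent ordered triples. -/
def goodmanE3 : ((⊤ : SimpleGraph (Fin 3)) →g G) ≃
    {t : β × β × β // G.Adj t.1 t.2.1 ∧ G.Adj t.1 t.2.2 ∧ G.Adj t.2.1 t.2.2} where
  toFun f := ⟨(f 0, f 1, f 2),
    f.map_rel (by decide), f.map_rel (by decide), f.map_rel (by decide)⟩
  invFun t := ⟨![t.1.1, t.1.2.1, t.1.2.2], by
    intro i j h
    fin_cases i <;> fin_cases j <;> simp_all [G.adj_symm] <;>
      first
        | exact t.2.1 | exact t.2.2.1 | exact t.2.2.2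
        | exact t.2.1.symm | exact t.2.2.1.symm | exact t.2.2.2.symm⟩
  left_inv f := by ext i; fin_cases i <;> rfl
  right_inv t := rfl

omit [DecidableEq β] in
theorem goodman_card2 : Nat.card ((⊤ : SimpleGraph (Fin 2)) →g G) = ∑ u : β, G.degree u := by
  rw [Nat.card_congr (goodmanE2 G), Nat.card_eq_fintype_card, Fintype.card_subtype,
    Finset.card_filter, Fintype.sum_prod_type]
  refine Finset.sum_congr rfl fun u _ => ?_
  rw [SimpleGraph.degree, SimpleGraph.neighborFinset_eq_filter, Finset.card_filter]

theorem goodman_card3 : Nat.card ((⊤ : SimpleGraph (Fin 3)) →g G) =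
    ∑ u : β, ∑ v ∈ G.neighborFinset u, #(G.neighborFinset u ∩ G.neighborFinset v) := by
  rw [Nat.card_congr (goodmanE3 G), Nat.card_eq_fintype_card, Fintype.card_subtype,
    Finset.card_filter, Fintype.sum_prod_type]
  refine Finset.sum_congr rfl fun u _ => ?_
  rw [Fintype.sum_prod_type]
  refine Eq.symm ?_
  calc ∑ v ∈ G.neighborFinset u, #(G.neighborFinset u ∩ G.neighborFinset v)
      = ∑ v : β, if G.Adj u v then #(G.neighborFinset u ∩ G.neighborFinset v) else 0 := by
        rw [← Finset.sum_filter, ← SimpleGraph.neighborFinset_eq_filter]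
    _ = ∑ v : β, ∑ w : β, if G.Adj u v ∧ G.Adj u w ∧ G.Adj v w then 1 else 0 := by
        refine Finset.sum_congr rfl fun v _ => ?_
        by_cases h : G.Adj u v
        · rw [if_pos h,
            show G.neighborFinset u ∩ G.neighborFinset v
              = Finset.univ.filter (fun w => G.Adj u w ∧ G.Adj v w) by ext w; simp,
            Finset.card_filter]
          exact Finset.sum_congr rfl fun w _ => by simp [h]
        · simp [h]

/-- double counting over darts -/
theorem goodman_dc : ∑ u : β, ∑ v ∈ G.neighborFinset u, G.degree v
    = ∑ u : β, G.degree u ^ 2 := by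
  rw [Finset.sum_comm' (t' := Finset.univ) (s' := fun v => G.neighborFinset v)
    (fun x y => by simp [SimpleGraph.adj_comm])]
  refine Finset.sum_congr rfl fun v _ => ?_
  rw [Finset.sum_const, smul_eq_mul, SimpleGraph.card_neighborFinset_eq_degree, sq]

theorem goodman_key : 2 * ∑ u : β, G.degree u ^ 2 ≤
    Nat.card ((⊤ : SimpleGraph (Fin 3)) →g G)
      + Fintype.card β * Nat.card ((⊤ : SimpleGraph (Fin 2)) →g G) := by
  rw [goodman_card3, goodman_card2]
  calc 2 * ∑ u : β, G.degree u ^ 2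
      = ∑ u : β, ∑ v ∈ G.neighborFinset u, (G.degree u + G.degree v) := by
        rw [two_mul]
        simp only [Finset.sum_add_distrib]
        rw [goodman_dc]
        congr 1
        refine Finset.sum_congr rfl fun u _ => ?_
        rw [Finset.sum_const, smul_eq_mul, SimpleGraph.card_neighborFinset_eq_degree, sq]
    _ ≤ ∑ u : β, ∑ v ∈ G.neighborFinset u,
          (#(G.neighborFinset u ∩ G.neighborFinset v) + Fintype.card β) := by
        refine Finset.sum_le_sum fun u _ => Finset.sum_le_sum fun v _ => ?_
        rw [SimpleGraph.degree, SimpleGraph.degree, ← Finset.card_inter_add_card_union]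
        exact Nat.add_le_add_left (Finset.card_le_univ _) _
    _ = (∑ u : β, ∑ v ∈ G.neighborFinset u, #(G.neighborFinset u ∩ G.neighborFinset v))
          + Fintype.card β * ∑ u : β, G.degree u := by
        simp only [Finset.sum_add_distrib]
        congr 1
        rw [Finset.mul_sum]
        refine Finset.sum_congr rfl fun u _ => ?_
        rw [Finset.sum_const, smul_eq_mul, SimpleGraph.card_neighborFinset_eq_degree, mul_comm]

end Aux

/-- Goodman's inequality: `t(K₃, G) ≥ 2 t(K₂, G)² − t(K₂, G)` for every finite graph `G`
with nonempty vertex set. -/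
theorem goodman_inequality {β : Type} [Fintype β] [Nonempty β] (G : SimpleGraph β) :
    homDensity (⊤ : SimpleGraph (Fin 3)) G ≥
      2 * homDensity (⊤ : SimpleGraph (Fin 2)) G ^ 2 -
        homDensity (⊤ : SimpleGraph (Fin 2)) G := by
  classical
  have hn : (0 : ℝ) < (Fintype.card β : ℝ) := by
    exact_mod_cast Fintype.card_pos
  set n : ℝ := (Fintype.card β : ℝ) with hn_def
  set N2 : ℕ := Nat.card ((⊤ : SimpleGraph (Fin 2)) →g G) with hN2
  set N3 : ℕ := Nat.card ((⊤ : SimpleGraph (Fin 3)) →g G) with hN3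
  have h2 : (N2 : ℝ) = ∑ u : β, (G.degree u : ℝ) := by
    rw [hN2, goodman_card2]; push_cast; ring
  have key : 2 * ∑ u : β, (G.degree u : ℝ) ^ 2 ≤ (N3 : ℝ) + n * N2 := by
    have := goodman_key G
    have : ((2 * ∑ u : β, G.degree u ^ 2 : ℕ) : ℝ) ≤ ((N3 + Fintype.card β * N2 : ℕ) : ℝ) := by
      exact_mod_cast this
    push_cast at this
    linarith
  have cs : (∑ u : β, (G.degree u : ℝ)) ^ 2 ≤ n * ∑ u : β, (G.degree u : ℝ) ^ 2 := by
    have := sq_sum_le_card_mul_sum_sq (s := (Finset.univ : Finset β))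
      (f := fun u => (G.degree u : ℝ))
    simpa [hn_def] using this
  set S : ℝ := ∑ u : β, (G.degree u : ℝ) ^ 2 with hS
  rw [← h2] at cs
  have main : 2 * (N2 : ℝ) ^ 2 - (N2 : ℝ) * n ^ 2 ≤ (N3 : ℝ) * n := by
    have h1 : 2 * S * n ≤ ((N3 : ℝ) + n * N2) * n :=
      mul_le_mul_of_nonneg_right key hn.le
    nlinarith [cs, h1]
  have hcard : homDensity (⊤ : SimpleGraph (Fin 2)) G = (N2 : ℝ) / n ^ 2 := by
    simp [homDensity, hN2, hn_def]
  have hcard3 : homDensity (⊤ : SimpleGraph (Fin 3)) G = (N3 : ℝ) / n ^ 3 := by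
    simp [homDensity, hN3, hn_def]
  rw [ge_iff_le, hcard, hcard3]
  calc 2 * ((N2 : ℝ) / n ^ 2) ^ 2 - (N2 : ℝ) / n ^ 2
      = (2 * (N2 : ℝ) ^ 2 - (N2 : ℝ) * n ^ 2) / n ^ 4 := by
        field_simp
    _ ≤ ((N3 : ℝ) * n) / n ^ 4 := by
        apply div_le_div_of_nonneg_right main (by positivity)
    _ = (N3 : ℝ) / n ^ 3 := by
        field_simp
end

section
/- Let S be any subset of ℕ. In the group G_S = ⟨a, b, c, d ∣ aⁿ b a⁻ⁿ = cⁿ d c⁻ⁿ for all n ∈ S⟩ — formally, the presented group PresentedGroup R_S on the free group on four generators a, b, c, d with relator set R_S = { aⁿ·b·a⁻ⁿ·(cⁿ·d·c⁻ⁿ)⁻¹ : n ∈ S } — the element represented by the word aⁿ b a⁻ⁿ cⁿ d⁻¹ c⁻ⁿ equals the identity if and only if n ∈ S, for every n ∈ ℕ. -/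
namespace HigmanGS

/-- The generators `a, b, c, d` of the free group on four generators. -/
def a : FreeGroup (Fin 4) := FreeGroup.of 0
def b : FreeGroup (Fin 4) := FreeGroup.of 1
def c : FreeGroup (Fin 4) := FreeGroup.of 2
def d : FreeGroup (Fin 4) := FreeGroup.of 3

/-- The relator set `{ aⁿ b a⁻ⁿ (cⁿ d c⁻ⁿ)⁻¹ : n ∈ S }` of the group `G_S`. -/
def rels (S : Set ℕ) : Set (FreeGroup (Fin 4)) :=
  {g | ∃ n ∈ S, g = a ^ n * b * (a ^ n)⁻¹ * (c ^ n * d * (c ^ n)⁻¹)⁻¹}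

open SemidirectProduct Multiplicative

abbrev K := Equiv.Perm (Fin 3)

def kk : K := Equiv.swap 0 1
def hh : K := Equiv.swap 1 2

noncomputable def kpow : ZMod 2 → K := fun e => if e = 0 then 1 else kk

lemma kpow_add (e f : ZMod 2) : kpow (e + f) = kpow e * kpow f := by
  fin_cases e <;> fin_cases f <;> first | rfl | (simp [kpow, kk]; decide)

lemma kpow_zero : kpow 0 = 1 := rfl

def shiftAut (u : ℤ) : MulAut (ℤ → K) :=
  { toFun := fun f q => f (q - u)
    invFun := fun f q => f (q + u)
    left_inv := fun f => funext fun q => by simp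
    right_inv := fun f => funext fun q => by simp
    map_mul' := fun f g => rfl }

def phi : Multiplicative ℤ →* MulAut (ℤ → K) where
  toFun u := shiftAut u.toAdd
  map_one' := MulEquiv.ext fun f => funext fun q => by
    show f (q - 0) = f q
    rw [sub_zero]
  map_mul' u v := MulEquiv.ext fun f => funext fun q => by
    show f (q - (u.toAdd + v.toAdd)) = f (q - u.toAdd - v.toAdd)
    ring_nf

abbrev H := (ℤ → K) ⋊[phi] Multiplicative ℤ

lemma inr_mul_inl (g : Multiplicative ℤ) (f : ℤ → K) :
    (inr g : H) * inl f = inl (phi g f) * inr g := by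
  rw [inl_aut, mul_assoc, ← map_mul, inv_mul_cancel, map_one, mul_one]

lemma conj_formula (f g : ℤ → K) (u : Multiplicative ℤ) :
    (inl f * inr u : H) * inl g * (inl f * inr u)⁻¹ = inl (f * phi u g * f⁻¹) := by
  rw [mul_inv_rev, ← map_inv, ← map_inv, mul_assoc (inl f) (inr u) (inl g), inr_mul_inl,
    ← mul_assoc (inl f), ← map_mul, mul_assoc (inl (f * phi u g)) (inr u),
    ← mul_assoc (inr u), ← map_mul, mul_inv_cancel, map_one, one_mul, ← map_mul]

open scoped Classical in
noncomputable def s (S : Set ℕ) (q : ℤ) : ZMod 2 :=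
  if q ≤ 0 then 0 else (if 0 ∈ S then 0 else 1) + (if q.toNat ∈ S then 0 else 1)

open scoped Classical in
noncomputable def t0 (S : Set ℕ) : ZMod 2 := if 0 ∈ S then 0 else 1

lemma s_zero (S : Set ℕ) : s S 0 = 0 := by simp [s]

lemma s_mem {S : Set ℕ} {m : ℕ} (hm : m ∈ S) : s S m = t0 S := by
  rcases Nat.eq_zero_or_pos m with h | h
  · subst h; simp [s, t0, hm]
  · have h1 : ¬ ((m : ℤ) ≤ 0) := by omega
    simp [s, t0, h1, Int.toNat_natCast, hm]
    exact fun h' => absurd h' (by omega)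

lemma s_not_mem {S : Set ℕ} {n : ℕ} (hn : n ∉ S) : s S n = t0 S + 1 := by
  rcases Nat.eq_zero_or_pos n with h | h
  · subst h
    have h0 : (0 : ℕ) ∉ S := hn
    simp only [Nat.cast_zero, s_zero, t0, if_neg h0]
    decide
  · have h1 : ¬ ((n : ℤ) ≤ 0) := by omega
    simp [s, t0, h1, Int.toNat_natCast, hn]
    exact fun h' => absurd h' (by omega)

noncomputable def B0 (S : Set ℕ) : K := kpow (t0 S) * hh * (kpow (t0 S))⁻¹

noncomputable def A : H := inr (ofAdd 1)
noncomputable def B (S : Set ℕ) : H :=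
  inl (fun q => if q = 0 then B0 S else 1)
noncomputable def gam (S : Set ℕ) : ℤ → K := fun q => kpow (s S q - s S (q - 1))
noncomputable def C (S : Set ℕ) : H := inl (gam S) * inr (ofAdd 1)
noncomputable def D : H := inl (fun q => if q = 0 then hh else 1)

lemma A_pow (m : ℕ) : A ^ m = inr (ofAdd (m : ℤ)) := by
  rw [A, ← map_pow]
  congr 1
  rw [← ofAdd_nsmul]
  simp

lemma phi_apply (u : ℤ) (f : ℤ → K) (q : ℤ) :
    phi (ofAdd u) f q = f (q - u) := rfl

noncomputable def Gam (S : Set ℕ) (m : ℤ) : ℤ → K := fun q => kpow (s S q - s S (q - m))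

lemma C_pow (S : Set ℕ) (m : ℕ) :
    C S ^ m = inl (Gam S m) * inr (ofAdd (m : ℤ)) := by
  induction m with
  | zero =>
    simp only [pow_zero, Nat.cast_zero]
    have h0 : Gam S 0 = 1 := by
      funext q; simp [Gam, kpow_zero]
    rw [h0, map_one, one_mul, ofAdd_zero, map_one]
  | succ m ih =>
    rw [pow_succ, ih, C, mul_assoc (inl (Gam S (m:ℕ))), ← mul_assoc (inr (ofAdd (m:ℤ))),
      inr_mul_inl, mul_assoc (inl (phi (ofAdd (m:ℤ)) (gam S))), ← map_mul,
      ← mul_assoc (inl (Gam S (m:ℕ))), ← map_mul]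
    have h1 : Gam S (m:ℕ) * phi (ofAdd (m:ℤ)) (gam S) = Gam S ((m+1:ℕ):ℤ) := by
      funext q
      show kpow (s S q - s S (q - m)) * kpow (s S (q-m) - s S (q - m - 1)) = _
      rw [← kpow_add]
      show _ = kpow (s S q - s S (q - ((m+1:ℕ):ℤ)))
      congr 1
      have h2 : q - ((m+1:ℕ):ℤ) = q - m - 1 := by omega
      rw [h2]
      try ring
    have h3 : ofAdd (m:ℤ) * ofAdd 1 = ofAdd ((m+1:ℕ):ℤ) := by
      rw [← ofAdd_add]; congr 1 <;> try omega
    rw [h1, h3]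

lemma conjA (S : Set ℕ) (m : ℕ) :
    A ^ m * B S * (A ^ m)⁻¹ =
      inl (fun q => if q = (m : ℤ) then B0 S else 1) := by
  have h0 : (inr (ofAdd (m:ℤ)) : H) = inl 1 * inr (ofAdd (m:ℤ)) := by
    rw [map_one, one_mul]
  rw [A_pow, B, h0, conj_formula]
  rw [one_mul, inv_one, mul_one]
  congr 1
  funext q
  show phi (ofAdd (m:ℤ)) _ q = _
  rw [phi_apply]
  by_cases h : q = (m : ℤ)
  · have : q - (m:ℤ) = 0 := by omega
    simp [h, this]
  · have : ¬ (q - (m:ℤ) = 0) := by omega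
    simp [h, this]

lemma conjC (S : Set ℕ) (m : ℕ) :
    C S ^ m * D * (C S ^ m)⁻¹ =
      inl (fun q => if q = (m : ℤ) then kpow (s S m) * hh * (kpow (s S m))⁻¹ else 1) := by
  rw [C_pow, D, conj_formula]
  congr 1
  funext q
  show Gam S m q * phi (ofAdd (m:ℤ)) _ q * (Gam S m q)⁻¹ = _
  rw [phi_apply]
  by_cases h : q = (m : ℤ)
  · have h2 : q - (m:ℤ) = 0 := by omega
    have h3 : Gam S m q = kpow (s S m) := by
      show kpow (s S q - s S (q - (m:ℤ))) = _
      rw [h2, s_zero, h, sub_zero]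
    simp only [h2, if_pos rfl, if_pos h, h3, eq_self_iff_true, if_true]
  · have h2 : ¬ (q - (m:ℤ) = 0) := by omega
    simp [h, h2]

lemma relation_holds (S : Set ℕ) {m : ℕ} (hm : m ∈ S) :
    A ^ m * B S * (A ^ m)⁻¹ = C S ^ m * D * (C S ^ m)⁻¹ := by
  rw [conjA, conjC, s_mem hm]
  rfl

lemma relation_fails (S : Set ℕ) {n : ℕ} (hn : n ∉ S)
    (h : A ^ n * B S * (A ^ n)⁻¹ = C S ^ n * D * (C S ^ n)⁻¹) : False := by
  rw [conjA, conjC, s_not_mem hn] at h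
  have h2 := congrFun (inl_injective h) (n : ℤ)
  simp only [if_pos rfl] at h2
  rw [B0] at h2
  revert h2
  generalize t0 S = e
  fin_cases e <;> (simp [kpow, kk, hh]; decide)

noncomputable def f (S : Set ℕ) : Fin 4 → H := fun i =>
  match i with
  | 0 => A
  | 1 => B S
  | 2 => C S
  | 3 => D

lemma rels_mapped (S : Set ℕ) : ∀ r ∈ rels S, FreeGroup.lift (f S) r = 1 := by
  rintro r ⟨m, hm, rfl⟩
  simp only [a, b, c, d, map_mul, map_pow, map_inv, FreeGroup.lift_apply_of]
  show A ^ m * B S * (A ^ m)⁻¹ * (C S ^ m * D * (C S ^ m)⁻¹)⁻¹ = 1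
  rw [relation_holds S hm, mul_inv_cancel]

/-- In `G_S = ⟨a, b, c, d ∣ aⁿ b a⁻ⁿ = cⁿ d c⁻ⁿ for n ∈ S⟩`, the word
`aⁿ b a⁻ⁿ cⁿ d⁻¹ c⁻ⁿ` represents the identity if and only if `n ∈ S`. -/
theorem word_eq_one_iff_mem (S : Set ℕ) (n : ℕ) :
    ((PresentedGroup.of 0 : PresentedGroup (rels S)) ^ n * PresentedGroup.of 1 *
        ((PresentedGroup.of 0 : PresentedGroup (rels S)) ^ n)⁻¹ *
        (PresentedGroup.of 2 : PresentedGroup (rels S)) ^ n *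
        (PresentedGroup.of 3 : PresentedGroup (rels S))⁻¹ *
        ((PresentedGroup.of 2 : PresentedGroup (rels S)) ^ n)⁻¹ = 1) ↔ n ∈ S := by
  constructor
  · intro hw
    by_contra hn
    have hψ := congrArg (PresentedGroup.toGroup (rels_mapped S)) hw
    simp only [map_mul, map_pow, map_inv, map_one, PresentedGroup.toGroup.of] at hψ
    have hA : f S 0 = A := rfl
    have hB : f S 1 = B S := rfl
    have hC : f S 2 = C S := rfl
    have hD : f S 3 = D := rfl
    rw [hA, hB, hC, hD] at hψ
    have h2 : (A ^ n * B S * (A ^ n)⁻¹) * (C S ^ n * D * (C S ^ n)⁻¹)⁻¹ = 1 := by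
      rw [← hψ]; group
    exact relation_fails S hn (mul_inv_eq_one.mp h2)
  · intro hn
    have key : PresentedGroup.mk (rels S)
        (a ^ n * b * (a ^ n)⁻¹ * (c ^ n * d * (c ^ n)⁻¹)⁻¹) = 1 :=
      (QuotientGroup.eq_one_iff _).2
        (Subgroup.subset_normalClosure ⟨n, hn, rfl⟩)
    simp only [map_mul, map_pow, map_inv] at key
    have hof : ∀ i : Fin 4, PresentedGroup.mk (rels S) (FreeGroup.of i) =
        (PresentedGroup.of i : PresentedGroup (rels S)) := fun _ => rfl
    rw [a, b, c, d] at key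
    rw [hof 0, hof 1, hof 2, hof 3] at key
    rw [← key]
    group

end HigmanGS
end

section
/- Rabin's theorem on games: there exists a computable function g : ℕ → ℕ such that in the three-move game where A chooses x₁, then B chooses x₂, then A chooses x₃, and A wins exactly when x₁ + x₂ = g(x₃): (1) player B has a winning strategy, i.e. for every x₁ ∈ ℕ there exists x₂ ∈ ℕ such that for all x₃ ∈ ℕ, x₁ + x₂ ≠ g(x₃); but (2) B has no computable winning strategy, i.e. there is no computable function w : ℕ → ℕ such that for all x₁, x₃ ∈ ℕ, x₁ + w(x₁) ≠ g(x₃). -/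
open Nat.Partrec Nat.Partrec.Code Function

namespace RabinProof

/-- `sB m = true` iff, decoding `m = pair x s`, the code numbered `x`, on input `0`,
halts exactly at stage `s+1` (in the sense of `evaln`). -/
def sB (m : ℕ) : Bool :=
  (evaln (m.unpair.2 + 1) (Denumerable.ofNat Code m.unpair.1) 0).isSome &&
    !(evaln m.unpair.2 (Denumerable.ofNat Code m.unpair.1) 0).isSome

def Sp (m : ℕ) : Prop := sB m = true

instance : DecidablePred Sp := fun _ => instDecidableEqBool _ _

/-- The (diagonal-free) halting set: codes halting on input `0`. -/
def Kp (x : ℕ) : Prop := ((Denumerable.ofNat Code x).eval 0).Dom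

theorem sB_prim : Primrec sB := by
  have h1 : Primrec fun m : ℕ =>
      (evaln (m.unpair.2 + 1) (Denumerable.ofNat Code m.unpair.1) 0).isSome :=
    Primrec.option_isSome.comp <| primrec_evaln.comp <|
      ((Primrec.succ.comp (Primrec.snd.comp Primrec.unpair)).pair
        ((Primrec.ofNat Code).comp (Primrec.fst.comp Primrec.unpair))).pair (Primrec.const 0)
  have h2 : Primrec fun m : ℕ =>
      (evaln m.unpair.2 (Denumerable.ofNat Code m.unpair.1) 0).isSome :=
    Primrec.option_isSome.comp <| primrec_evaln.comp <|
      ((Primrec.snd.comp Primrec.unpair).pair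
        ((Primrec.ofNat Code).comp (Primrec.fst.comp Primrec.unpair))).pair (Primrec.const 0)
  exact (Primrec.dom_bool₂ fun a b => a && !b).comp h1 h2

theorem mem_Sp_pair {x : ℕ} (h : Kp x) : ∃ s, Sp (Nat.pair x s) := by
  obtain ⟨y, hy⟩ := Part.dom_iff_mem.1 h
  obtain ⟨t, ht⟩ := evaln_complete.1 hy
  have hsome : ∃ t, (evaln t (Denumerable.ofNat Code x) 0).isSome :=
    ⟨t, Option.isSome_iff_exists.2 ⟨y, ht⟩⟩
  have hs0 := Nat.find_spec hsome
  have hs0pos : Nat.find hsome ≠ 0 := by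
    intro h0
    rw [h0] at hs0
    simp [evaln] at hs0
  obtain ⟨s, hs⟩ := Nat.exists_eq_succ_of_ne_zero hs0pos
  refine ⟨s, ?_⟩
  have hlt : ¬ (evaln s (Denumerable.ofNat Code x) 0).isSome :=
    Nat.find_min hsome (by omega)
  rw [hs] at hs0
  unfold Sp sB
  rw [Nat.unpair_pair]
  simp only [hs0, Bool.true_and, Bool.not_eq_true']
  exact Bool.not_eq_true _ ▸ (by simpa using hlt)

theorem Kp_infinite : {x | Kp x}.Infinite :=
  Set.infinite_of_injective_forall_mem
    (f := fun n : ℕ => Encodable.encode (Code.const n))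
    (fun a b h => const_inj (Encodable.encode_injective h))
    (fun n => by
      simp only [Set.mem_setOf_eq, Kp, Denumerable.ofNat_encode, eval_const]
      trivial)

theorem Sp_infinite : {m | Sp m}.Infinite := by
  have := Kp_infinite.to_subtype
  exact Set.infinite_of_injective_forall_mem
    (f := fun x : {x | Kp x} => Nat.pair x.1 (Classical.choose (mem_Sp_pair x.2)))
    (fun a b h => by
      have h1 := congrArg (fun n => n.unpair.1) h
      simpa [Subtype.ext_iff] using h1)
    (fun x => Classical.choose_spec (mem_Sp_pair x.2))

/-- `e k` is the `k`-th element of `Sp` in increasing order. -/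
noncomputable def e (k : ℕ) : ℕ := Nat.nth Sp k

/-- `f` is a computable injective enumeration of the halting set `Kp`. -/
noncomputable def f (k : ℕ) : ℕ := (e k).unpair.1

def cnt (n : ℕ) : ℕ :=
  Nat.rec 0 (fun k ih => ih + bif sB k then 1 else 0) n

theorem cnt_eq (n : ℕ) : cnt n = Nat.count Sp n := by
  induction n with
  | zero => rfl
  | succ k ih =>
    rw [Nat.count_succ]
    show cnt k + (bif sB k then 1 else 0) = _
    rw [ih]
    by_cases h : Sp k
    · have : sB k = true := h
      simp [this, h]
    · have : sB k = false := by
        unfold Sp at h; exact Bool.not_eq_true _ ▸ (by simpa using h)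
      simp [this, h]

theorem cnt_comp : Computable cnt := by
  have hstep : Computable₂ fun (_ : ℕ) (p : ℕ × ℕ) => p.2 + bif sB p.1 then 1 else 0 := by
    have : Primrec fun q : ℕ × ℕ × ℕ => q.2.2 + bif sB q.2.1 then 1 else 0 :=
      Primrec.nat_add.comp (Primrec.snd.comp Primrec.snd)
        (Primrec.cond (sB_prim.comp (Primrec.fst.comp Primrec.snd))
          (Primrec.const 1) (Primrec.const 0))
    exact this.to_comp.to₂
  exact (Computable.nat_rec Computable.id (Computable.const 0) hstep).of_eq fun n => rfl

theorem e_comp : Computable e := by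
  have hpred : Computable fun q : ℕ × ℕ => sB q.2 && decide (cnt (q.2 + 1) = q.1 + 1) := by
    have heq : Computable₂ fun a b : ℕ => decide (a = b) := Primrec.eq.decide.to_comp
    exact ((Primrec.dom_bool₂ (· && ·)).to_comp).comp
      ((sB_prim.comp Primrec.snd).to_comp)
      (heq.comp (cnt_comp.comp (Computable.succ.comp Computable.snd))
        (Computable.succ.comp Computable.fst))
  have hrf : Partrec fun k => Nat.rfind fun m => (fun m => sB m && decide (cnt (m + 1) = k + 1) : ℕ → Bool) m :=
    Partrec.rfind hpred.to₂.partrec₂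
  refine hrf.of_eq_tot fun k => ?_
  refine Nat.mem_rfind.2 ?_
  constructor
  · have hSpe : Sp (e k) := Nat.nth_mem_of_infinite Sp_infinite k
    have hcc : Nat.count Sp (e k + 1) = k + 1 := Nat.count_nth_succ_of_infinite Sp_infinite k
    refine Part.mem_ofOption.2 (Option.mem_some_iff.2 ?_)
    rw [Bool.and_eq_true, decide_eq_true_iff]
    exact ⟨hSpe, by rw [cnt_eq]; exact hcc⟩
  · intro m hm
    refine Part.mem_ofOption.2 (Option.mem_some_iff.2 ?_)
    rw [Bool.and_eq_false_iff]
    by_cases hS : Sp m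
    · right
      rw [decide_eq_false_iff_not, cnt_eq]
      have h1 : Nat.count Sp (m + 1) ≤ Nat.count Sp (e k) := Nat.count_monotone Sp hm
      have h2 : Nat.count Sp (e k) = k := Nat.count_nth_of_infinite Sp_infinite k
      omega
    · left
      unfold Sp at hS
      exact Bool.not_eq_true _ ▸ (by simpa using hS)

theorem f_comp : Computable f :=
  ((Primrec.fst.comp Primrec.unpair).to_comp).comp e_comp

theorem Sp_e (k : ℕ) : Sp (e k) := Nat.nth_mem_of_infinite Sp_infinite k

theorem Kp_f (k : ℕ) : Kp (f k) := by
  have hSpe : Sp (e k) := Sp_e k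
  unfold Sp sB at hSpe
  rw [Bool.and_eq_true] at hSpe
  obtain ⟨y, hy⟩ := Option.isSome_iff_exists.1 hSpe.1
  exact Part.dom_iff_mem.2 ⟨y, evaln_complete.2 ⟨_, hy⟩⟩

theorem f_stage_lt {a b : ℕ} (hab : f a = f b) (hlt : (e a).unpair.2 < (e b).unpair.2) :
    False := by
  unfold f at hab
  have ha : Sp (e a) := Sp_e a
  have hb : Sp (e b) := Sp_e b
  unfold Sp sB at ha hb
  rw [Bool.and_eq_true] at ha hb
  obtain ⟨y, hy⟩ := Option.isSome_iff_exists.1 ha.1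
  have hmono : y ∈ evaln (e b).unpair.2 (Denumerable.ofNat Code (e a).unpair.1) 0 :=
    evaln_mono (by omega) hy
  rw [hab] at hmono
  have hsome : (evaln (e b).unpair.2 (Denumerable.ofNat Code (e b).unpair.1) 0).isSome :=
    Option.isSome_iff_exists.2 ⟨y, hmono⟩
  rw [Bool.not_eq_true'] at hb
  rw [hb.2] at hsome
  exact Bool.noConfusion hsome

theorem f_inj : Injective f := by
  intro a b hab
  rcases Nat.lt_trichotomy (e a).unpair.2 (e b).unpair.2 with h | h | h
  · exact absurd (f_stage_lt hab h) id
  · have hfst : (e a).unpair.1 = (e b).unpair.1 := hab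
    have : e a = e b := by
      have h1 := Nat.pair_unpair (e a)
      have h2 := Nat.pair_unpair (e b)
      rw [← h1, ← h2, hfst, h]
    exact Nat.nth_injective Sp_infinite this
  · exact absurd (f_stage_lt hab.symm h) id

theorem Kp_iff (x : ℕ) : Kp x ↔ ∃ k, f k = x := by
  constructor
  · intro h
    obtain ⟨s, hs⟩ := mem_Sp_pair h
    refine ⟨Nat.count Sp (Nat.pair x s), ?_⟩
    unfold f e
    rw [Nat.nth_count hs, Nat.unpair_pair]
  · rintro ⟨k, rfl⟩
    exact Kp_f k

/-- The deficiency set of `f`. -/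
def Dp (n : ℕ) : Prop := ∃ m, n < m ∧ f m < f n

/-- A computable enumeration of (essentially) the deficiency set. -/
noncomputable def g (x : ℕ) : ℕ :=
  bif decide (x.unpair.1 < x.unpair.2) && decide (f x.unpair.2 < f x.unpair.1)
    then x.unpair.1 else 0

theorem g_comp : Computable g := by
  have u1 : Computable fun x : ℕ => x.unpair.1 := (Primrec.fst.comp Primrec.unpair).to_comp
  have u2 : Computable fun x : ℕ => x.unpair.2 := (Primrec.snd.comp Primrec.unpair).to_comp
  have hlt : Computable₂ fun a b : ℕ => decide (a < b) := Primrec.nat_lt.decide.to_comp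
  exact Computable.cond
    (((Primrec.dom_bool₂ (· && ·)).to_comp).comp (hlt.comp u1 u2)
      (hlt.comp (f_comp.comp u2) (f_comp.comp u1)))
    u1 (Computable.const 0)

theorem g_cases (x : ℕ) : g x = 0 ∨ Dp (g x) := by
  unfold g
  rcases hb : decide (x.unpair.1 < x.unpair.2) && decide (f x.unpair.2 < f x.unpair.1) with _ | _
  · left; rfl
  · right
    rw [Bool.and_eq_true, decide_eq_true_iff, decide_eq_true_iff] at hb
    exact ⟨x.unpair.2, hb.1, hb.2⟩

theorem Dp_mem_range {y : ℕ} (h : Dp y) : ∃ x, g x = y := by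
  obtain ⟨m, h1, h2⟩ := h
  refine ⟨Nat.pair y m, ?_⟩
  unfold g
  rw [Nat.unpair_pair]
  simp [h1, h2]

theorem not_Dp_unbounded (N : ℕ) : ∃ n, N ≤ n ∧ ¬ Dp n := by
  classical
  have hex : ∃ v, ∃ n, N ≤ n ∧ f n = v := ⟨f N, N, le_rfl, rfl⟩
  obtain ⟨n, hNn, hfn⟩ := Nat.find_spec hex
  refine ⟨n, hNn, ?_⟩
  rintro ⟨m, hnm, hlt⟩
  exact Nat.find_min hex (hfn ▸ hlt) ⟨m, hNn.trans hnm.le, rfl⟩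

end RabinProof

/-- Rabin's theorem: there is a computable `g : ℕ → ℕ` such that, in the three-move game where
A wins exactly when `x₁ + x₂ = g x₃`, player B has a winning strategy, but no computable
winning strategy. -/
theorem rabin_game :
    ∃ g : ℕ → ℕ, Computable g ∧
      (∀ x₁ : ℕ, ∃ x₂ : ℕ, ∀ x₃ : ℕ, x₁ + x₂ ≠ g x₃) ∧
      ¬ ∃ w : ℕ → ℕ, Computable w ∧ ∀ x₁ x₃ : ℕ, x₁ + w x₁ ≠ g x₃ := by
  classical
  open RabinProof in
  refine ⟨RabinProof.g, RabinProof.g_comp, ?_, ?_⟩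
  · intro x₁
    obtain ⟨n, hn, hD⟩ := not_Dp_unbounded (x₁ + 1)
    refine ⟨n - x₁, fun x₃ h => ?_⟩
    have hx : x₁ + (n - x₁) = n := by omega
    rw [hx] at h
    rcases g_cases x₃ with h0 | hDg
    · omega
    · rw [← h] at hDg
      exact hD hDg
  · rintro ⟨w, hw, hww⟩
    set h : ℕ → ℕ := fun x => x + w x with hhdef
    have hcomp : Computable h := Primrec.nat_add.to_comp.comp Computable.id hw
    have hhD : ∀ x, ¬ Dp (h x) := by
      intro x hD
      obtain ⟨x₃, hx₃⟩ := Dp_mem_range hD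
      exact hww x x₃ hx₃.symm
    have hge : ∀ x, x ≤ h x := fun x => Nat.le_add_right x (w x)
    -- iterate to get a strictly increasing sequence avoiding Dp
    set t : ℕ → ℕ := fun k => Nat.rec (motive := fun _ => ℕ) (h 0) (fun _ ih => h (ih + 1)) k
      with htdef
    have hts : ∀ k, t (k + 1) = h (t k + 1) := fun k => rfl
    have htcomp : Computable t := by
      have hstep : Computable₂ fun (_ : ℕ) (p : ℕ × ℕ) => h (p.2 + 1) :=
        (hcomp.comp (Computable.succ.comp (Computable.snd.comp Computable.snd))).to₂
      exact (Computable.nat_rec Computable.id (Computable.const (h 0)) hstep).of_eq fun n => rfl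
    have htD : ∀ k, ¬ Dp (t k) := by
      intro k
      cases k with
      | zero => exact hhD 0
      | succ k => rw [hts k]; exact hhD (t k + 1)
    have htmono : StrictMono t := by
      apply strictMono_nat_of_lt_succ
      intro k
      have := hge (t k + 1)
      rw [hts k]
      omega
    have hub : ∀ y, ∃ k, y < f (t k) := by
      intro y
      by_contra hno
      push_neg at hno
      have hbd : ∀ k, f (t k) < y + 1 := fun k => Nat.lt_succ_of_le (hno k)
      obtain ⟨i, j, hij, hfij⟩ :=
        Finite.exists_ne_map_eq_of_infinite fun k : ℕ => (⟨f (t k), hbd k⟩ : Fin (y + 1))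
      have : f (t i) = f (t j) := by simpa [Fin.ext_iff] using hfij
      exact hij (htmono.injective (f_inj this))
    set F : ℕ → ℕ := fun y => Nat.find (hub y) with hFdef
    have hFcomp : Computable F := by
      have hpred : Computable₂ fun (y k : ℕ) => decide (y < f (t k)) :=
        (Primrec.nat_lt.decide.to_comp.comp Computable.fst
          (f_comp.comp (htcomp.comp Computable.snd))).to₂
      have hrf : Partrec fun y => Nat.rfind fun k =>
          (fun k => decide (y < f (t k)) : ℕ → Bool) k :=
        Partrec.rfind hpred.partrec₂
      refine hrf.of_eq_tot fun y => ?_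
      refine Nat.mem_rfind.2 ?_
      constructor
      · refine Part.mem_ofOption.2 (Option.mem_some_iff.2 ?_)
        rw [decide_eq_true_iff]
        exact Nat.find_spec (hub y)
      · intro m hm
        refine Part.mem_ofOption.2 (Option.mem_some_iff.2 ?_)
        rw [decide_eq_false_iff_not]
        exact Nat.find_min (hub y) hm
    set χ : ℕ → Bool := fun y =>
      Nat.rec (motive := fun _ => Bool) (decide (f 0 = y))
        (fun m ih => ih || decide (f (m + 1) = y)) (t (F y)) with hχdef
    have heqc : Computable₂ fun a b : ℕ => decide (a = b) := Primrec.eq.decide.to_comp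
    have hχcomp : Computable χ := by
      have hg0 : Computable fun y : ℕ => decide (f 0 = y) :=
        heqc.comp (Computable.const (f 0)) Computable.id
      have hstep : Computable₂ fun (y : ℕ) (p : ℕ × Bool) => p.2 || decide (f (p.1 + 1) = y) :=
        (((Primrec.dom_bool₂ (· || ·)).to_comp).comp
          (Computable.snd.comp Computable.snd)
          (heqc.comp (f_comp.comp (Computable.succ.comp (Computable.fst.comp Computable.snd)))
            Computable.fst)).to₂
      exact Computable.nat_rec (htcomp.comp hFcomp) hg0 hstep
    have hbex : ∀ (y b : ℕ),
        (Nat.rec (motive := fun _ => Bool) (decide (f 0 = y))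
          (fun m ih => ih || decide (f (m + 1) = y)) b = true) ↔ ∃ m ≤ b, f m = y := by
      intro y b
      induction b with
      | zero =>
        show decide (f 0 = y) = true ↔ _
        rw [decide_eq_true_iff]
        constructor
        · intro hf; exact ⟨0, le_rfl, hf⟩
        · rintro ⟨m, hm, hf⟩; rwa [Nat.le_zero.1 hm] at hf
      | succ k ih =>
        show (_ || _) = true ↔ _
        rw [Bool.or_eq_true, ih, decide_eq_true_iff]
        constructor
        · rintro (⟨m, hm, hf⟩ | hf)
          · exact ⟨m, hm.trans (Nat.le_succ k), hf⟩
          · exact ⟨k + 1, le_rfl, hf⟩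
        · rintro ⟨m, hm, hf⟩
          rcases Nat.lt_succ_iff_lt_or_eq.1 (Nat.lt_succ_of_le hm) with h' | h'
          · exact Or.inl ⟨m, Nat.lt_succ_iff.1 h', hf⟩
          · exact Or.inr (h' ▸ hf)
    have hKχ : ∀ y, Kp y ↔ χ y = true := by
      intro y
      have hχy : (χ y = true) ↔ ∃ m ≤ t (F y), f m = y := hbex y (t (F y))
      rw [hχy]
      constructor
      · intro hK
        obtain ⟨k, hk⟩ := (Kp_iff y).1 hK
        refine ⟨k, ?_, hk⟩
        by_contra hgt
        push_neg at hgt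
        have h2 : f k < f (t (F y)) := by rw [hk]; exact Nat.find_spec (hub y)
        exact htD (F y) ⟨k, hgt, h2⟩
      · rintro ⟨m, _, hf⟩
        exact (Kp_iff y).2 ⟨m, hf⟩
    have hKcomp : ComputablePred fun c : Code => (c.eval 0).Dom := by
      rw [ComputablePred.computable_iff]
      refine ⟨fun c => χ (Encodable.encode c), hχcomp.comp Computable.encode,
        funext fun c => ?_⟩
      have h1 : Kp (Encodable.encode c) ↔ (c.eval 0).Dom := by
        unfold Kp
        rw [Denumerable.ofNat_encode]
      exact propext (h1.symm.trans (hKχ _))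
    exact ComputablePred.halting_problem 0 hKcomp
end
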